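/- With r ∈ [-1,0), h and φ as above built from a continuous f of sub-exponential growth, the function Π(p,p₀) = ∫_{ℝⁿ₊}(p₀ - h(p∘x))₊ φ(x)dx satisfies Π(p,+0) = 0, ∂Π/∂p₀(p,+0) = 0 for all p > 0, and positive homogeneity Π(p₁,…,pₙ,p₀) = p₀ Π(p₁/p₀,…,pₙ/p₀,1) for all strictly positive arguments. -/

import Mathlib

open MeasureTheory Real Set Filter Topology

namespace CESAux
open intervalIntegral
lemma integral_rpow'' {a b q : ℝ} (h : -1 < q) :
    ∫ x in a..b, x ^ q = (b ^ (q + 1) - a ^ (q + 1)) / (q + 1) := integral_rpow (Or.inl h)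
lemma intervalIntegrable_rpow'' {a b q : ℝ} (h : -1 < q) :
    IntervalIntegrable (fun x => x ^ q) MeasureTheory.volume a b := intervalIntegrable_rpow' h
end CESAux

private lemma abs_deriv_le_of_lip' {f : ℝ → ℝ} {x ε L : ℝ} (hε : 0 < ε) (hL : 0 ≤ L)
    (h : ∀ y, |y - x| < ε → |f y - f x| ≤ L * |y - x|) : |deriv f x| ≤ L := by
  by_cases hd : DifferentiableAt ℝ f x
  · have ht : Tendsto (slope f x) (𝓝[≠] x) (𝓝 (deriv f x)) :=
      hasDerivAt_iff_tendsto_slope.mp hd.hasDerivAt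
    refine le_of_tendsto ht.abs ?_
    have h1 : Metric.ball x ε ∈ 𝓝[≠] x := nhdsWithin_le_nhds (Metric.ball_mem_nhds x hε)
    filter_upwards [h1, self_mem_nhdsWithin] with y hy hy'
    have hyx : y - x ≠ 0 := sub_ne_zero.2 hy'
    have hb : |f y - f x| ≤ L * |y - x| := h y (by simpa [Real.dist_eq] using hy)
    rw [slope_def_field, abs_div, div_le_iff₀ (abs_pos.2 hyx)]
    exact hb
  · rw [deriv_zero_of_not_differentiableAt hd]; simpa using hL

set_option maxHeartbeats 1000000 in
/-- Boundary behaviour and positive homogeneity of the profit function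
`Π(p,p₀) = ∫ (p₀ - h(p∘x))₊ φ(x) dx` built from the CES unit cost with `r ∈ [-1,0)`:
`Π(p,+0) = 0`, `∂Π/∂p₀(p,+0) = 0` and `Π(p,p₀) = p₀ Π(p/p₀,1)`. -/
theorem ces_profit_boundary_and_homogeneity
    (n : ℕ) (hn : 0 < n) (r : ℝ) (hr : r ∈ Set.Ico (-1:ℝ) 0)
    (f : (Fin n → ℝ) → ℝ) (hf_cont : Continuous f)
    (hf_growth : ∀ A > (0:ℝ), ∃ C > (0:ℝ), ∀ x : Fin n → ℝ, (∀ i, 0 ≤ x i) →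
      |f x| ≤ C * Real.exp (A * ‖x‖))
    (φ : (Fin n → ℝ) → ℝ)
    (hφ : φ = fun x => (-r) ^ (n - 1) * (∏ i, x i) ^ (-r - 1) *
      ∫ t in Ioi (0:ℝ), t ^ (n - 1) * Real.exp (-t) * f (fun i => t * (x i) ^ (-r)))
    (Pi : (Fin n → ℝ) → ℝ → ℝ)
    (hPi : Pi = fun p p₀ => ∫ x in {x : Fin n → ℝ | ∀ i, 0 ≤ x i},
      max (p₀ - (∑ i, (p i) ^ (-r) * (x i) ^ (-r)) ^ (-1 / r)) 0 * φ x) :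
    (∀ p : Fin n → ℝ, (∀ i, 0 < p i) →
        Tendsto (fun p₀ => Pi p p₀) (nhdsWithin 0 (Ioi 0)) (nhds 0)) ∧
    (∀ p : Fin n → ℝ, (∀ i, 0 < p i) →
        Tendsto (fun p₀ => deriv (Pi p) p₀) (nhdsWithin 0 (Ioi 0)) (nhds 0)) ∧
    (∀ p : Fin n → ℝ, ∀ p₀ : ℝ, (∀ i, 0 < p i) → 0 < p₀ →
        Pi p p₀ = p₀ * Pi (fun i => p i / p₀) 1) := by
  obtain ⟨hr1, hr2⟩ := hr
  have hnr : 0 < -r := by linarith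
  have hrne : r ≠ 0 := by linarith
  have hir : 0 < -1 / r := div_pos_of_neg_of_neg (by norm_num) hr2
  have hnen : Nonempty (Fin n) := ⟨⟨0, hn⟩⟩
  set Ω : Set (Fin n → ℝ) := {x : Fin n → ℝ | ∀ i, 0 ≤ x i} with hΩdef
  have hΩm : MeasurableSet Ω := by
    have : Ω = ⋂ i, {x : Fin n → ℝ | 0 ≤ x i} := by ext x; simp [hΩdef]
    rw [this]
    exact MeasurableSet.iInter fun i =>
      measurableSet_le measurable_const (measurable_pi_apply i)
  -- measurability of φ
  have hφm : Measurable φ := by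
    have hFc : Continuous fun q : (Fin n → ℝ) × ℝ =>
        q.2 ^ (n - 1) * Real.exp (-q.2) * f (fun i => q.2 * (q.1 i) ^ (-r)) := by
      refine Continuous.mul (Continuous.mul (continuous_snd.pow _)
        (Real.continuous_exp.comp continuous_snd.neg)) ?_
      exact hf_cont.comp (continuous_pi fun i => continuous_snd.mul
        ((Real.continuous_rpow_const hnr.le).comp ((continuous_apply i).comp continuous_fst)))
    have hsm : StronglyMeasurable fun x : Fin n → ℝ =>
        ∫ t in Ioi (0:ℝ), t ^ (n - 1) * Real.exp (-t) * f (fun i => t * (x i) ^ (-r)) :=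
      hFc.stronglyMeasurable.integral_prod_right'
    rw [hφ]
    exact (measurable_const.mul (by measurability)).mul hsm.measurable
  -- main analytic part, for fixed p
  have main : ∀ p : Fin n → ℝ, (∀ i, 0 < p i) →
      (Tendsto (fun p₀ => Pi p p₀) (𝓝[>] (0:ℝ)) (𝓝 0)) ∧
      (Tendsto (fun p₀ => deriv (Pi p) p₀) (𝓝[>] (0:ℝ)) (𝓝 0)) := by
    intro p hp
    set S : (Fin n → ℝ) → ℝ := fun x => ∑ i, p i ^ (-r) * x i ^ (-r) with hSdef
    set H : (Fin n → ℝ) → ℝ := fun x => S x ^ (-1 / r) with hHdef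
    have hPi' : ∀ a, Pi p a = ∫ x in Ω, max (a - H x) 0 * φ x := by
      intro a; rw [hPi]
    have hHnn : ∀ x ∈ Ω, 0 ≤ H x := by
      intro x hx
      have hS : 0 ≤ S x := Finset.sum_nonneg fun i _ =>
        mul_nonneg (Real.rpow_nonneg (hp i).le _) (Real.rpow_nonneg (hx i) _)
      exact Real.rpow_nonneg hS _
    -- support of the max factor
    have hsupp : ∀ c : ℝ, ∀ a : ℝ, a ≤ c → ∀ x ∈ Ω, (∃ i, c / p i < x i) →
        max (a - H x) 0 = 0 := by
      intro c a hac x hx ⟨i, hi⟩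
      have hpx : 0 ≤ p i * x i := mul_nonneg (hp i).le (hx i)
      have h1 : (p i * x i) ^ (-r) ≤ S x := by
        rw [Real.mul_rpow (hp i).le (hx i)]
        simpa [hSdef] using Finset.single_le_sum
          (f := fun j => p j ^ (-r) * x j ^ (-r))
          (fun j _ => mul_nonneg (Real.rpow_nonneg (hp j).le _) (Real.rpow_nonneg (hx j) _))
          (Finset.mem_univ i)
      have h2 : p i * x i ≤ H x := by
        have h3 : ((p i * x i) ^ (-r)) ^ (-1 / r) ≤ S x ^ (-1 / r) :=
          Real.rpow_le_rpow (Real.rpow_nonneg hpx _) h1 hir.le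
        rwa [← Real.rpow_mul hpx, show (-r) * (-1 / r) = 1 by field_simp,
          Real.rpow_one] at h3
      have h4 : c < p i * x i := by
        rw [div_lt_iff₀ (hp i)] at hi; linarith [hi]
      exact max_eq_right (by linarith)
    -- the constant M bounding the inner integral on the unit box
    have hB : 0 < 1 + ∑ i, (p i)⁻¹ ^ (-r) := by
      refine add_pos_of_pos_of_nonneg one_pos ?_
      exact Finset.sum_nonneg fun i _ => Real.rpow_nonneg (inv_nonneg.2 (hp i).le) _
    set B : ℝ := 1 + ∑ i, (p i)⁻¹ ^ (-r) with hBdef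
    obtain ⟨C, hC, hCf⟩ := hf_growth (2 * B)⁻¹ (inv_pos.2 (by linarith))
    -- integrable majorant for the inner integral
    have hG_int : IntegrableOn (fun t : ℝ => C * (t ^ ((n:ℝ) - 1) * Real.exp (-(1/2) * t)))
        (Ioi (0:ℝ)) := by
      have h0 : IntegrableOn (fun t : ℝ => t ^ ((n:ℝ) - 1) * Real.exp (-(1/2) * t ^ (1:ℝ)))
          (Ioi (0:ℝ)) := by
        refine integrableOn_rpow_mul_exp_neg_mul_rpow ?_ zero_lt_one (by norm_num)
        have : (1:ℝ) ≤ (n:ℝ) := by exact_mod_cast hn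
        linarith
      simp_rw [Real.rpow_one] at h0
      exact h0.const_mul C
    set M : ℝ := ∫ t in Ioi (0:ℝ), C * (t ^ ((n:ℝ) - 1) * Real.exp (-(1/2) * t)) with hMdef
    have hM0 : 0 ≤ M := by
      refine setIntegral_nonneg measurableSet_Ioi fun t ht => ?_
      exact mul_nonneg hC.le (mul_nonneg (Real.rpow_nonneg (le_of_lt ht) _) (Real.exp_pos _).le)
    -- bound for the inner integral on the unit box
    have hinner_bd : ∀ x : Fin n → ℝ, (∀ i, 0 ≤ x i) → (∀ i, x i ≤ 1 / p i) →
        |∫ t in Ioi (0:ℝ), t ^ (n - 1) * Real.exp (-t) * f (fun i => t * (x i) ^ (-r))| ≤ M := by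
      intro x hx0 hx1
      have h1 : |∫ t in Ioi (0:ℝ), t ^ (n - 1) * Real.exp (-t) * f (fun i => t * (x i) ^ (-r))|
          ≤ ∫ t in Ioi (0:ℝ), ‖t ^ (n - 1) * Real.exp (-t) * f (fun i => t * (x i) ^ (-r))‖ :=
        by rw [← Real.norm_eq_abs]; exact norm_integral_le_integral_norm _
      refine h1.trans (integral_mono_of_nonneg (ae_of_all _ fun t => norm_nonneg _) hG_int ?_)
      rw [Filter.EventuallyLE, ae_restrict_iff' measurableSet_Ioi]
      refine ae_of_all _ fun t ht => ?_
      have ht0 : (0:ℝ) < t := ht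
      have hynn : ∀ i, 0 ≤ t * (x i) ^ (-r) :=
        fun i => mul_nonneg ht0.le (Real.rpow_nonneg (hx0 i) _)
      have hnorm : ‖fun i => t * (x i) ^ (-r)‖ ≤ t * B := by
        refine (pi_norm_le_iff_of_nonneg (mul_nonneg ht0.le hB.le)).2 fun i => ?_
        rw [Real.norm_eq_abs, abs_of_nonneg (hynn i)]
        refine mul_le_mul_of_nonneg_left ?_ ht0.le
        have hxi : (x i) ^ (-r) ≤ ((p i)⁻¹) ^ (-r) :=
          Real.rpow_le_rpow (hx0 i) (by simpa [one_div] using hx1 i) hnr.le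
        refine hxi.trans ?_
        have := Finset.single_le_sum
          (f := fun j => ((p j)⁻¹) ^ (-r))
          (fun j _ => Real.rpow_nonneg (inv_nonneg.2 (hp j).le) _) (Finset.mem_univ i)
        rw [hBdef]; linarith
      have hfb : |f (fun i => t * (x i) ^ (-r))| ≤ C * Real.exp ((1/2) * t) := by
        refine (hCf _ hynn).trans ?_
        refine mul_le_mul_of_nonneg_left (Real.exp_le_exp.2 ?_) hC.le
        have h2 : (2*B)⁻¹ * ‖fun i => t * (x i) ^ (-r)‖ ≤ (2*B)⁻¹ * (t * B) :=
          mul_le_mul_of_nonneg_left hnorm (inv_pos.2 (by linarith)).le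
        refine h2.trans (le_of_eq ?_)
        field_simp
      rw [Real.norm_eq_abs, abs_mul, abs_mul, abs_of_nonneg (pow_nonneg ht0.le _),
        abs_of_nonneg (Real.exp_pos _).le]
      calc t ^ (n - 1) * Real.exp (-t) * |f (fun i => t * (x i) ^ (-r))|
          ≤ t ^ (n - 1) * Real.exp (-t) * (C * Real.exp ((1/2) * t)) := by
            refine mul_le_mul_of_nonneg_left hfb ?_
            exact mul_nonneg (pow_nonneg ht0.le _) (Real.exp_pos _).le
        _ = C * (t ^ ((n:ℝ) - 1) * Real.exp (-(1/2) * t)) := by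
            rw [← Real.rpow_natCast t (n - 1), Nat.cast_pred hn,
              show -(1/2) * t = -t + (1/2) * t by ring, Real.exp_add]
            ring
    -- bound for φ on the unit box
    set K : ℝ := (-r) ^ (n - 1) * M with hKdef
    have hK0 : 0 ≤ K := mul_nonneg (pow_nonneg hnr.le _) hM0
    have hφbd : ∀ x ∈ Ω, (∀ i, x i ≤ 1 / p i) → |φ x| ≤ K * ∏ i, (x i) ^ (-r - 1) := by
      intro x hx hx1
      have hprod : (0:ℝ) ≤ ∏ i, x i := Finset.prod_nonneg fun i _ => hx i
      have hpp : (∏ i, x i) ^ (-r - 1) = ∏ i, (x i) ^ (-r - 1) :=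
        (Real.finset_prod_rpow Finset.univ _ (fun i _ => hx i) _).symm
      have hPnn : (0:ℝ) ≤ ∏ i, (x i) ^ (-r - 1) :=
        Finset.prod_nonneg fun i _ => Real.rpow_nonneg (hx i) _
      rw [hφ]
      simp only
      rw [abs_mul, abs_mul, abs_of_nonneg (pow_nonneg hnr.le (n-1)),
        abs_of_nonneg (Real.rpow_nonneg hprod _), hpp]
      calc (-r) ^ (n-1) * (∏ i, (x i) ^ (-r - 1)) *
            |∫ t in Ioi (0:ℝ), t ^ (n - 1) * Real.exp (-t) * f (fun i => t * (x i) ^ (-r))|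
          ≤ (-r) ^ (n-1) * (∏ i, (x i) ^ (-r - 1)) * M := by
            refine mul_le_mul_of_nonneg_left (hinner_bd x hx hx1) ?_
            exact mul_nonneg (pow_nonneg hnr.le _) hPnn
        _ = K * ∏ i, (x i) ^ (-r - 1) := by rw [hKdef]; ring
    -- the product majorant ψ and its integral
    set ψ : ℝ → (Fin n → ℝ) → ℝ := fun c x =>
      ∏ i, Set.indicator (Icc 0 (c / p i)) (fun t => t ^ (-r - 1)) (x i) with hψdef
    have hψnn : ∀ c x, 0 ≤ ψ c x := by
      intro c x
      refine Finset.prod_nonneg fun i _ => ?_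
      exact Set.indicator_nonneg (fun t ht => Real.rpow_nonneg ht.1 _) _
    have h1d : ∀ c : ℝ, 0 < c → ∀ i : Fin n,
        Integrable (Set.indicator (Icc 0 (c / p i)) (fun t : ℝ => t ^ (-r - 1))) := by
      intro c hc i
      refine IntegrableOn.integrable_indicator ?_ measurableSet_Icc
      rw [integrableOn_Icc_iff_integrableOn_Ioc]
      exact (CESAux.intervalIntegrable_rpow'' (by linarith : (-1:ℝ) < -r - 1)
        (a := 0) (b := c / p i)).1
    have hψ_int : ∀ c : ℝ, 0 < c → Integrable (ψ c) := by
      intro c hc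
      exact Integrable.fintype_prod (f := fun i =>
        Set.indicator (Icc 0 (c / p i)) (fun t : ℝ => t ^ (-r - 1))) (h1d c hc)
    have hψ_val : ∀ c : ℝ, 0 < c → ∫ x, ψ c x = ∏ i, (c / p i) ^ (-r) / (-r) := by
      intro c hc
      rw [hψdef, MeasureTheory.volume_pi]
      rw [integral_fintype_prod_eq_prod (ι := Fin n) (f := fun i t =>
        Set.indicator (Icc 0 (c / p i)) (fun s : ℝ => s ^ (-r - 1)) t)]
      refine Finset.prod_congr rfl fun i _ => ?_
      have hci : 0 ≤ c / p i := (div_pos hc (hp i)).le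
      rw [integral_indicator measurableSet_Icc, integral_Icc_eq_integral_Ioc,
        ← intervalIntegral.integral_of_le hci]
      have h2 : ∫ t in (0:ℝ)..(c / p i), t ^ (-r - 1)
          = ((c / p i) ^ (-r - 1 + 1) - (0:ℝ) ^ (-r - 1 + 1)) / (-r - 1 + 1) :=
        CESAux.integral_rpow'' (by linarith)
      rw [h2, show -r - 1 + 1 = -r by ring, Real.zero_rpow hnr.ne', sub_zero]
    -- master pointwise bound
    have hψ_box : ∀ c : ℝ, 0 < c → c ≤ 1 → ∀ a b : ℝ, a ≤ c → b ≤ c → ∀ x ∈ Ω,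
        ‖(max (a - H x) 0 - max (b - H x) 0) * φ x‖ ≤ |a - b| * (K * ψ c x) := by
      intro c hc hc1 a b ha hb x hx
      by_cases hbox : ∀ i, x i ≤ c / p i
      · have hψx : ψ c x = ∏ i, (x i) ^ (-r - 1) := by
          rw [hψdef]
          exact Finset.prod_congr rfl fun i _ =>
            Set.indicator_of_mem (Set.mem_Icc.2 ⟨hx i, hbox i⟩) _
        have h1 : |max (a - H x) 0 - max (b - H x) 0| ≤ |a - b| := by
          refine (abs_max_sub_max_le_abs (a - H x) (b - H x) 0).trans (le_of_eq ?_)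
          congr 1; ring
        have h2 : |φ x| ≤ K * ∏ i, (x i) ^ (-r - 1) := by
          refine hφbd x hx fun i => (hbox i).trans ?_
          exact (div_le_div_iff_of_pos_right (hp i)).2 hc1
        rw [hψx, Real.norm_eq_abs, abs_mul]
        exact mul_le_mul h1 h2 (abs_nonneg _) (abs_nonneg _)
      · push_neg at hbox
        rw [hsupp c a ha x hx hbox, hsupp c b hb x hx hbox, sub_zero, zero_mul,
          norm_zero]
        exact mul_nonneg (abs_nonneg _) (mul_nonneg hK0 (hψnn c x))
    -- measurability of the integrand
    have hmeas : ∀ a : ℝ, AEStronglyMeasurable (fun x => max (a - H x) 0 * φ x)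
        (volume.restrict Ω) := by
      intro a
      have hScont : Continuous S := by
        rw [hSdef]
        exact continuous_finset_sum _ fun i _ => continuous_const.mul
          ((Real.continuous_rpow_const hnr.le).comp (continuous_apply i))
      have hHcont : Continuous H := by
        rw [hHdef]
        exact (Real.continuous_rpow_const hir.le).comp hScont
      exact (((continuous_const.sub hHcont).max continuous_const).measurable.mul
        hφm).aestronglyMeasurable.restrict
    -- integrability of the integrand
    have hint : ∀ c : ℝ, 0 < c → c ≤ 1 → ∀ a : ℝ, 0 ≤ a → a ≤ c →
        IntegrableOn (fun x => max (a - H x) 0 * φ x) Ω := by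
      intro c hc hc1 a ha0 hac
      refine Integrable.mono' ((((hψ_int c hc).const_mul K).const_mul
        (|a - 0|)).restrict (s := Ω)) (hmeas a) ?_
      rw [ae_restrict_iff' hΩm]
      refine ae_of_all _ fun x hx => ?_
      have h0 : max (0 - H x) 0 = 0 := max_eq_right (by linarith [hHnn x hx])
      have := hψ_box c hc hc1 a 0 hac hc.le x hx
      rw [h0, sub_zero] at this
      simpa [mul_assoc] using this
    -- Pi p 0 = 0
    have hPi0 : Pi p 0 = 0 := by
      rw [hPi' 0]
      rw [setIntegral_congr_fun hΩm (g := fun _ => (0:ℝ)) (fun x hx => by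
        rw [max_eq_right (by linarith [hHnn x hx] : (0:ℝ) - H x ≤ 0), zero_mul])]
      exact integral_zero _ _
    -- key Lipschitz-type bound
    have hkey : ∀ c : ℝ, 0 < c → c ≤ 1 → ∀ a b : ℝ, 0 ≤ a → a ≤ c → 0 ≤ b → b ≤ c →
        |Pi p a - Pi p b| ≤ |a - b| * (K * ∏ i, (c / p i) ^ (-r) / (-r)) := by
      intro c hc hc1 a b ha0 hac hb0 hbc
      rw [hPi' a, hPi' b, ← integral_sub (hint c hc hc1 a ha0 hac) (hint c hc hc1 b hb0 hbc)]
      have hstep : ∀ x : Fin n → ℝ,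
          max (a - H x) 0 * φ x - max (b - H x) 0 * φ x
          = (max (a - H x) 0 - max (b - H x) 0) * φ x := fun x => by ring
      simp_rw [hstep]
      calc |∫ x in Ω, (max (a - H x) 0 - max (b - H x) 0) * φ x|
          ≤ ∫ x in Ω, ‖(max (a - H x) 0 - max (b - H x) 0) * φ x‖ := by
            rw [← Real.norm_eq_abs]; exact norm_integral_le_integral_norm _
        _ ≤ ∫ x in Ω, |a - b| * (K * ψ c x) := by
            refine integral_mono_of_nonneg (ae_of_all _ fun x => norm_nonneg _)
              ((((hψ_int c hc).const_mul K).const_mul (|a - b|)).restrict (s := Ω)) ?_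
            rw [Filter.EventuallyLE, ae_restrict_iff' hΩm]
            exact ae_of_all _ (hψ_box c hc hc1 a b hac hbc)
        _ = |a - b| * (K * ∫ x in Ω, ψ c x) := by
            rw [MeasureTheory.integral_const_mul, MeasureTheory.integral_const_mul]
        _ ≤ |a - b| * (K * ∫ x, ψ c x) := by
            refine mul_le_mul_of_nonneg_left (mul_le_mul_of_nonneg_left ?_ hK0) (abs_nonneg _)
            exact setIntegral_le_integral (hψ_int c hc) (ae_of_all _ (hψnn c))
        _ = |a - b| * (K * ∏ i, (c / p i) ^ (-r) / (-r)) := by rw [hψ_val c hc]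
    constructor
    -- Part 1 : Pi p (+0) = 0
    · have hb : ∀ᶠ a in 𝓝[>] (0:ℝ),
          |Pi p a| ≤ a * (K * ∏ i, (1 / p i) ^ (-r) / (-r)) := by
        filter_upwards [Ioc_mem_nhdsGT_of_mem
          (⟨le_rfl, one_pos⟩ : (0:ℝ) ∈ Ico 0 1)] with a ha
        have := hkey 1 one_pos le_rfl a 0 ha.1.le ha.2 le_rfl zero_le_one
        rwa [hPi0, sub_zero, sub_zero, abs_of_pos ha.1] at this
      have hg : Tendsto (fun a : ℝ => a * (K * ∏ i, (1 / p i) ^ (-r) / (-r)))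
          (𝓝[>] (0:ℝ)) (𝓝 0) := by
        have := (tendsto_id.mono_left nhdsWithin_le_nhds :
          Tendsto id (𝓝[>] (0:ℝ)) (𝓝 0)).mul_const (K * ∏ i, (1 / p i) ^ (-r) / (-r))
        simpa using this
      exact (tendsto_zero_iff_abs_tendsto_zero _).2
        (squeeze_zero' (Eventually.of_forall fun a => abs_nonneg _) hb hg)
    -- Part 2 : deriv tends to 0
    · have hVtend : Tendsto (fun a : ℝ => K * ∏ i, ((2 * a) / p i) ^ (-r) / (-r))
          (𝓝[>] (0:ℝ)) (𝓝 0) := by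
        have h0 : Tendsto (fun a : ℝ => ∏ i, ((2 * a) / p i) ^ (-r) / (-r))
            (𝓝[>] (0:ℝ)) (𝓝 (∏ _i : Fin n, (0:ℝ))) := by
          refine tendsto_finset_prod _ fun i _ => ?_
          have h1 : Tendsto (fun a : ℝ => (2 * a) / p i) (𝓝[>] (0:ℝ)) (𝓝 0) := by
            have := ((tendsto_id.mono_left nhdsWithin_le_nhds :
              Tendsto id (𝓝[>] (0:ℝ)) (𝓝 0)).const_mul (2:ℝ)).div_const (p i)
            simpa using this
          have h2 : Tendsto (fun z : ℝ => z ^ (-r)) (𝓝 0) (𝓝 0) := by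
            have := (Real.continuousAt_rpow_const 0 (-r) (Or.inr hnr.le)).tendsto
            simpa [Real.zero_rpow hnr.ne'] using this
          have := (h2.comp h1).div_const (-r)
          simpa using this
        rw [show (∏ _i : Fin n, (0:ℝ)) = 0 by
          simp [Finset.prod_const, Finset.card_univ, zero_pow hn.ne']] at h0
        simpa using h0.const_mul K
      have hb : ∀ᶠ a in 𝓝[>] (0:ℝ),
          |deriv (Pi p) a| ≤ K * ∏ i, ((2 * a) / p i) ^ (-r) / (-r) := by
        filter_upwards [Ioo_mem_nhdsGT_of_mem
          (⟨le_rfl, by norm_num⟩ : (0:ℝ) ∈ Ico 0 (1/2))] with a ha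
        obtain ⟨ha0, ha2⟩ := ha
        have hVnn : 0 ≤ K * ∏ i, ((2 * a) / p i) ^ (-r) / (-r) :=
          mul_nonneg hK0 (Finset.prod_nonneg fun i _ =>
            div_nonneg (Real.rpow_nonneg (div_nonneg (by linarith) (hp i).le) _) hnr.le)
        refine abs_deriv_le_of_lip' ha0 hVnn fun y hy => ?_
        rw [abs_lt] at hy
        have hy0 : 0 < y := by linarith [hy.1]
        have := hkey (2 * a) (by linarith) (by linarith) y a hy0.le
          (by linarith [hy.2]) ha0.le (by linarith)
        exact this.trans (le_of_eq (mul_comm _ _))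
      exact (tendsto_zero_iff_abs_tendsto_zero _).2
        (squeeze_zero' (Eventually.of_forall fun a => abs_nonneg _) hb hVtend)
  refine ⟨fun p hp => (main p hp).1, fun p hp => (main p hp).2, ?_⟩
  -- homogeneity
  intro p p₀ hp hp₀
  rw [hPi]
  simp only
  rw [← MeasureTheory.integral_const_mul]
  refine (setIntegral_congr_fun hΩm fun x hx => ?_).symm
  have hx : ∀ i, 0 ≤ x i := hx
  have hS : (0:ℝ) ≤ ∑ i, p i ^ (-r) * x i ^ (-r) :=
    Finset.sum_nonneg fun i _ =>
      mul_nonneg (Real.rpow_nonneg (hp i).le _) (Real.rpow_nonneg (hx i) _)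
  have key : (∑ i, (p i / p₀) ^ (-r) * x i ^ (-r)) ^ (-1 / r)
      = p₀⁻¹ * (∑ i, p i ^ (-r) * x i ^ (-r)) ^ (-1 / r) := by
    have h1 : ∀ i, (p i / p₀) ^ (-r) = p₀ ^ r * (p i ^ (-r)) := by
      intro i
      rw [Real.div_rpow (hp i).le hp₀.le, div_eq_mul_inv,
        ← Real.rpow_neg hp₀.le, neg_neg, mul_comm]
    calc (∑ i, (p i / p₀) ^ (-r) * x i ^ (-r)) ^ (-1 / r)
        = (p₀ ^ r * ∑ i, p i ^ (-r) * x i ^ (-r)) ^ (-1 / r) := by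
          rw [Finset.mul_sum]
          congr 1
          exact Finset.sum_congr rfl fun i _ => by rw [h1 i, mul_assoc]
      _ = (p₀ ^ r) ^ (-1 / r) * (∑ i, p i ^ (-r) * x i ^ (-r)) ^ (-1 / r) :=
          Real.mul_rpow (Real.rpow_nonneg hp₀.le _) hS
      _ = p₀⁻¹ * (∑ i, p i ^ (-r) * x i ^ (-r)) ^ (-1 / r) := by
          rw [← Real.rpow_mul hp₀.le, show r * (-1 / r) = -1 by field_simp,
            Real.rpow_neg_one]
  rw [key]
  have hmax : p₀ * max (1 - p₀⁻¹ * (∑ i, p i ^ (-r) * x i ^ (-r)) ^ (-1 / r)) 0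
      = max (p₀ - (∑ i, p i ^ (-r) * x i ^ (-r)) ^ (-1 / r)) 0 := by
    rw [mul_max_of_nonneg _ _ hp₀.le, mul_zero, mul_sub, mul_one,
      mul_inv_cancel_left₀ hp₀.ne']
  rw [← hmax]; ring
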